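/- Let d ≥ 2 be even, and let A be a finite-dimensional associative unital ℂ-algebra with two bases b and b' both indexed by Fin n. Then det_d(C^{A,b}(x)) ≠ 0 in MvPolynomial (Fin n) ℂ if and only if det_d(C^{A,b'}(x)) ≠ 0 in MvPolynomial (Fin n) ℂ; i.e., the vanishing of the algebra hyperdeterminant does not depend on the choice of basis. -/

import Mathlib

open Classical in
/-- Cayley's combinatorial hyperdeterminant of a `d`-way hypermatrix:
`det_d(X) = Σ_{σ₂,…,σ_d ∈ Perm I} sgn(σ₂)⋯sgn(σ_d) ∏_i X(i, σ₂ i, …, σ_d i)`. -/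
noncomputable def hdet {I : Type*} [Fintype I] [DecidableEq I] {R : Type*} [CommRing R]
    (d : ℕ) (X : (Fin d → I) → R) : R :=
  ∑ σ : Fin d → Equiv.Perm I,
    if ∀ h : 0 < d, σ ⟨0, h⟩ = 1 then
      (∏ ℓ, (Equiv.Perm.sign (σ ℓ) : ℤ)) • ∏ i, X fun ℓ => σ ℓ i
    else 0
/-- The algebra hypermatrix `C^{A,b}(x)`: its entry at `(i₁,…,i_d)` is `Σ_k c_k x_k`,
where `c_k` are the coordinates of `b_{i₁} ⋯ b_{i_d}` in the basis `b`. -/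
noncomputable def algHyper {A : Type*} [Ring A] [Algebra ℂ A] (d : ℕ) {n : ℕ}
    (b : Module.Basis (Fin n) ℂ A) : (Fin d → Fin n) → MvPolynomial (Fin n) ℂ :=
  fun v => ∑ k, MvPolynomial.C (b.repr (List.ofFn fun ℓ => b (v ℓ)).prod k) * MvPolynomial.X k

/-- The unrestricted hyperdeterminant sum, over all `d`-tuples of permutations. -/
noncomputable def Hdet {I : Type*} [Fintype I] [DecidableEq I] {R : Type*} [CommRing R]
    (d : ℕ) (X : (Fin d → I) → R) : R :=
  ∑ σ : Fin d → Equiv.Perm I,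
    (∏ ℓ, (Equiv.Perm.sign (σ ℓ) : ℤ)) • ∏ i, X fun ℓ => σ ℓ i

/-- For even `d > 0`, the unrestricted sum is `|Perm I|` times the restricted one. -/
theorem Hdet_eq_card_smul_hdet {I : Type*} [Fintype I] [DecidableEq I] {R : Type*} [CommRing R]
    (d : ℕ) (hd : 0 < d) (hde : Even d) (X : (Fin d → I) → R) :
    Hdet d X = (Fintype.card (Equiv.Perm I)) • hdet d X := by
  classical
  set i0 : Fin d := ⟨0, hd⟩
  set t : (Fin d → Equiv.Perm I) → R := fun σ =>
    (∏ ℓ, (Equiv.Perm.sign (σ ℓ) : ℤ)) • ∏ i, X fun ℓ => σ ℓ i with ht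
  have h1 : hdet d X = ∑ τ : {τ : Fin d → Equiv.Perm I // τ i0 = 1}, t τ.1 := by
    rw [hdet]
    rw [show (∑ σ : Fin d → Equiv.Perm I,
        if ∀ h : 0 < d, σ ⟨0, h⟩ = 1 then
          (∏ ℓ, (Equiv.Perm.sign (σ ℓ) : ℤ)) • ∏ i, X fun ℓ => σ ℓ i else 0)
        = ∑ σ : Fin d → Equiv.Perm I, if σ i0 = 1 then t σ else 0 from
      Finset.sum_congr rfl fun σ _ => by
        congr 1
        simp [hd, i0]]
    rw [← Finset.sum_filter]
    exact Finset.sum_subtype _ (fun x => by simp) t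
  let E : Equiv.Perm I × {τ : Fin d → Equiv.Perm I // τ i0 = 1} ≃ (Fin d → Equiv.Perm I) :=
  { toFun := fun p => fun ℓ => p.2.1 ℓ * p.1
    invFun := fun σ => (σ i0, ⟨fun ℓ => σ ℓ * (σ i0)⁻¹, by simp⟩)
    left_inv := fun p => by
      ext ℓ
      · simp [p.2.2]
      · simp [p.2.2]
    right_inv := fun σ => by
      ext ℓ x
      simp }
  have h2 : Hdet d X = ∑ p : Equiv.Perm I × {τ : Fin d → Equiv.Perm I // τ i0 = 1}, t (E p) := by
    rw [Hdet, ← ht]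
    exact (Fintype.sum_equiv E _ _ fun p => rfl).symm
  have h3 : ∀ (π : Equiv.Perm I) (τ : {τ : Fin d → Equiv.Perm I // τ i0 = 1}),
      t (E (π, τ)) = t τ.1 := by
    intro π τ
    have hsgn : (∏ ℓ, (Equiv.Perm.sign (τ.1 ℓ * π) : ℤ)) = ∏ ℓ, (Equiv.Perm.sign (τ.1 ℓ) : ℤ) := by
      simp only [Equiv.Perm.sign_mul, Units.val_mul]
      rw [Finset.prod_mul_distrib, Finset.prod_const, Finset.card_univ, Fintype.card_fin]
      rcases Int.units_eq_one_or (Equiv.Perm.sign π) with h | h <;> rw [h] <;>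
        simp [hde.neg_one_pow]
    have hprod : (∏ i, X fun ℓ => (τ.1 ℓ * π) i) = ∏ i, X fun ℓ => τ.1 ℓ i :=
      Equiv.prod_comp π (fun i => X fun ℓ => τ.1 ℓ i)
    simp only [t, E, Equiv.coe_fn_mk, hsgn, hprod]
  rw [h2, Fintype.sum_prod_type, h1]
  rw [Finset.sum_comm]
  simp only [h3]
  rw [← Finset.sum_comm]
  simp [Finset.sum_const, Finset.card_univ]

/-- The unrestricted hyperdeterminant commutes with ring homomorphisms. -/
theorem Hdet_ringHom {I : Type*} [Fintype I] [DecidableEq I] {R S : Type*} [CommRing R]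
    [CommRing S] (φ : R →+* S) (d : ℕ) (X : (Fin d → I) → R) :
    Hdet d (fun v => φ (X v)) = φ (Hdet d X) := by
  simp only [Hdet, map_sum, map_zsmul, map_prod]

/-- Transforming every slot of a hypermatrix by a matrix `M` multiplies the unrestricted
hyperdeterminant by `det M ^ d`. -/
theorem Hdet_transform {I : Type*} [Fintype I] [DecidableEq I] {R : Type*} [CommRing R]
    (d : ℕ) (M : Matrix I I R) (X : (Fin d → I) → R) :
    Hdet d (fun v => ∑ w : Fin d → I, (∏ ℓ, M (v ℓ) (w ℓ)) * X w) = M.det ^ d * Hdet d X := by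
  classical
  have det_apply' : ∀ (h : I → I),
      (∑ π : Equiv.Perm I, ((Equiv.Perm.sign π : ℤ) : R) * ∏ i, M (π i) (h i))
        = (M.submatrix id h).det := by
    intro h
    rw [Matrix.det_apply]
    refine Finset.sum_congr rfl fun π _ => ?_
    rw [Units.smul_def, zsmul_eq_mul]
    rfl
  have stepA : Hdet d (fun v => ∑ w : Fin d → I, (∏ ℓ, M (v ℓ) (w ℓ)) * X w)
      = ∑ g : I → Fin d → I,
          (∏ ℓ, (M.submatrix id (fun i => g i ℓ)).det) * ∏ i, X (g i) := by
    rw [Hdet]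
    have h1 : ∀ σ : Fin d → Equiv.Perm I,
        ((∏ ℓ, (Equiv.Perm.sign (σ ℓ) : ℤ)) •
          ∏ i, ∑ w : Fin d → I, (∏ ℓ, M (σ ℓ i) (w ℓ)) * X w)
        = ∑ g : I → Fin d → I,
            (∏ ℓ, (((Equiv.Perm.sign (σ ℓ) : ℤ) : R) * ∏ i, M (σ ℓ i) (g i ℓ)))
              * ∏ i, X (g i) := by
      intro σ
      rw [Finset.prod_univ_sum (fun _ => (Finset.univ : Finset (Fin d → I)))
          (fun i w => (∏ ℓ, M (σ ℓ i) (w ℓ)) * X w)]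
      rw [Finset.smul_sum]
      refine Finset.sum_congr rfl fun g _ => ?_
      rw [zsmul_eq_mul]
      push_cast
      rw [Finset.prod_mul_distrib, Finset.prod_mul_distrib]
      rw [Finset.prod_comm (f := fun i ℓ => M (σ ℓ i) (g i ℓ))]
      ring
    simp only [h1]
    rw [Finset.sum_comm]
    refine Finset.sum_congr rfl fun g _ => ?_
    rw [← Finset.sum_mul]
    congr 1
    rw [← Fintype.piFinset_univ]
    rw [← Finset.prod_univ_sum (fun _ => (Finset.univ : Finset (Equiv.Perm I)))
        (fun ℓ π => ((Equiv.Perm.sign π : ℤ) : R) * ∏ i, M (π i) (g i ℓ))]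
    exact Finset.prod_congr rfl fun ℓ _ => det_apply' _
  rw [stepA]
  have hzero : ∀ g : I → Fin d → I, (¬ ∀ ℓ, Function.Bijective fun i => g i ℓ) →
      (∏ ℓ, (M.submatrix id fun i => g i ℓ).det) = 0 := by
    intro g hg
    push_neg at hg
    obtain ⟨ℓ, hℓ⟩ := hg
    refine Finset.prod_eq_zero (Finset.mem_univ ℓ) ?_
    have hinj : ¬ Function.Injective fun i => g i ℓ := fun h =>
      hℓ (Finite.injective_iff_bijective.mp h)
    rw [Function.not_injective_iff] at hinj
    obtain ⟨a, c, hac, hne⟩ := hinj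
    rw [← Matrix.det_transpose]
    refine Matrix.det_zero_of_row_eq hne ?_
    funext j
    simp only [Matrix.transpose_apply, Matrix.submatrix_apply, id_eq]
    rw [hac]
  have stepB : (∑ g : I → Fin d → I,
        (∏ ℓ, (M.submatrix id (fun i => g i ℓ)).det) * ∏ i, X (g i))
      = ∑ ρ : Fin d → Equiv.Perm I,
          (∏ ℓ, (M.submatrix id ⇑(ρ ℓ)).det) * ∏ i, X (fun ℓ => ρ ℓ i) := by
    classical
    rw [show (∑ g : I → Fin d → I,
        (∏ ℓ, (M.submatrix id (fun i => g i ℓ)).det) * ∏ i, X (g i))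
      = ∑ g : I → Fin d → I,
          if ∀ ℓ, Function.Bijective fun i => g i ℓ then
            (∏ ℓ, (M.submatrix id (fun i => g i ℓ)).det) * ∏ i, X (g i) else 0 from
      Finset.sum_congr rfl fun g _ => by
        split_ifs with h
        · rfl
        · rw [hzero g h, zero_mul]]
    rw [← Finset.sum_filter]
    refine Finset.sum_bij
      (fun (g : I → Fin d → I) hg ℓ =>
        Equiv.ofBijective (fun x => g x ℓ) ((Finset.mem_filter.mp hg).2 ℓ)) ?_ ?_ ?_ ?_
    · intro g hg; exact Finset.mem_univ _
    · intro g hg g' hg' h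
      funext x ℓ
      exact congrArg (fun (e : I ≃ I) => e x) (congrFun h ℓ)
    · intro ρ _
      refine ⟨fun x ℓ => ρ ℓ x, Finset.mem_filter.mpr ⟨Finset.mem_univ _,
        fun ℓ => (ρ ℓ).bijective⟩, ?_⟩
      funext ℓ
      exact Equiv.ext fun x => rfl
    · intro g hg
      rfl
  rw [stepB]
  simp only [Matrix.det_permute']
  rw [Hdet, Finset.mul_sum]
  refine Finset.sum_congr rfl fun ρ _ => ?_
  rw [Finset.prod_mul_distrib, Finset.prod_const, Finset.card_univ, Fintype.card_fin,
    zsmul_eq_mul]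
  push_cast
  ring

/-- For even `d ≥ 2`, the vanishing of the algebra hyperdeterminant does not depend on the
choice of basis: for two bases `b, b'` of `A`, `det_d(C^{A,b}(x)) ≠ 0 ↔ det_d(C^{A,b'}(x)) ≠ 0`. -/
theorem algebra_hyperdeterminant_vanishing_basis_independent (d : ℕ) (hd : 2 ≤ d) (hde : Even d)
    (A : Type*) [Ring A] [Algebra ℂ A]
    (n : ℕ) (b b' : Module.Basis (Fin n) ℂ A) :
    hdet d (algHyper d b) ≠ 0 ↔ hdet d (algHyper d b') ≠ 0 := by
  classical
  have hd0 : 0 < d := lt_of_lt_of_le two_pos hd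
  set P : Matrix (Fin n) (Fin n) ℂ := b.toMatrix ⇑b' with hP
  set Q : Matrix (Fin n) (Fin n) ℂ := b'.toMatrix ⇑b with hQ
  have hPQ : P * Q = 1 := Module.Basis.toMatrix_mul_toMatrix_flip b b'
  set φ : MvPolynomial (Fin n) ℂ →ₐ[ℂ] MvPolynomial (Fin n) ℂ :=
    MvPolynomial.aeval (fun m => ∑ k, MvPolynomial.C (Q k m) * MvPolynomial.X k) with hφ
  -- expansion of the b'-product in terms of b-products
  have hprod : ∀ v : Fin d → Fin n, (List.ofFn fun ℓ => b' (v ℓ)).prod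
      = ∑ w : Fin d → Fin n, (∏ ℓ, P (w ℓ) (v ℓ)) • (List.ofFn fun ℓ => b (w ℓ)).prod := by
    intro v
    have h1 : (fun ℓ => b' (v ℓ)) = fun ℓ => ∑ j, P j (v ℓ) • b j := by
      funext ℓ
      simp only [hP, Module.Basis.toMatrix_apply]
      exact (b.sum_repr (b' (v ℓ))).symm
    calc (List.ofFn fun ℓ => b' (v ℓ)).prod
        = MultilinearMap.mkPiAlgebraFin ℂ d A (fun ℓ => b' (v ℓ)) := by
          rw [MultilinearMap.mkPiAlgebraFin_apply]
      _ = MultilinearMap.mkPiAlgebraFin ℂ d A (fun ℓ => ∑ j, P j (v ℓ) • b j) := by rw [h1]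
      _ = ∑ w : Fin d → Fin n, (∏ ℓ, P (w ℓ) (v ℓ)) • (List.ofFn fun ℓ => b (w ℓ)).prod := by
          rw [MultilinearMap.map_sum]
          refine Finset.sum_congr rfl fun w _ => ?_
          rw [MultilinearMap.map_smul_univ, MultilinearMap.mkPiAlgebraFin_apply]
  -- key identity: the b'-hypermatrix is a slot transform of the substituted b-hypermatrix
  have key : ∀ v : Fin d → Fin n, algHyper d b' v
      = ∑ w : Fin d → Fin n, (∏ ℓ, MvPolynomial.C (P (w ℓ) (v ℓ))) * φ (algHyper d b w) := by
    intro v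
    have hQdef : ∀ k m, Q k m = b'.repr (b m) k := fun k m => Module.Basis.toMatrix_apply b' ⇑b k m
    have hrepr : ∀ w : Fin d → Fin n, ∀ k,
        b'.repr (List.ofFn fun ℓ => b (w ℓ)).prod k
          = ∑ m, Q k m * b.repr (List.ofFn fun ℓ => b (w ℓ)).prod m := by
      intro w k
      conv_lhs => rw [← b.sum_repr (List.ofFn fun ℓ => b (w ℓ)).prod]
      rw [map_sum, Finsupp.coe_finset_sum, Finset.sum_apply]
      refine Finset.sum_congr rfl fun m _ => ?_
      rw [map_smul, Finsupp.coe_smul, Pi.smul_apply, smul_eq_mul, hQdef, mul_comm]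
    rw [algHyper]
    simp only [hprod v, map_sum, map_smul, Finsupp.coe_finset_sum, Finsupp.coe_smul,
      Finset.sum_apply, Pi.smul_apply, smul_eq_mul, hrepr]
    simp only [algHyper, hφ, map_sum, map_mul, MvPolynomial.aeval_C, MvPolynomial.aeval_X,
      MvPolynomial.algebraMap_eq, map_prod, Finset.mul_sum, Finset.sum_mul]
    rw [Finset.sum_comm]
    refine Finset.sum_congr rfl fun w _ => ?_
    rw [Finset.sum_comm]
    refine Finset.sum_congr rfl fun k _ => ?_
    refine Finset.sum_congr rfl fun m _ => ?_
    ring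
  -- ψ is a left inverse of φ, so φ is injective
  set ψ : MvPolynomial (Fin n) ℂ →ₐ[ℂ] MvPolynomial (Fin n) ℂ :=
    MvPolynomial.aeval (fun k => ∑ j, MvPolynomial.C (P j k) * MvPolynomial.X j) with hψ
  have hcomp : ψ.comp φ = AlgHom.id ℂ (MvPolynomial (Fin n) ℂ) := by
    refine MvPolynomial.algHom_ext fun m => ?_
    simp only [AlgHom.comp_apply, hφ, hψ, MvPolynomial.aeval_X, map_sum, map_mul,
      MvPolynomial.aeval_C, MvPolynomial.algebraMap_eq, AlgHom.id_apply]
    simp only [Finset.mul_sum]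
    rw [Finset.sum_comm]
    have h2 : ∀ j, (∑ k, MvPolynomial.C (Q k m) *
        (MvPolynomial.C (P j k) * MvPolynomial.X j))
        = MvPolynomial.C ((P * Q) j m) * MvPolynomial.X j := by
      intro j
      rw [Matrix.mul_apply, map_sum, Finset.sum_mul]
      refine Finset.sum_congr rfl fun k _ => ?_
      rw [map_mul]
      ring
    simp only [h2, hPQ, Matrix.one_apply, apply_ite MvPolynomial.C, map_one, map_zero,
      ite_mul, one_mul, zero_mul, Finset.sum_ite_eq', Finset.mem_univ, if_true]
  have hφinj : Function.Injective φ := by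
    intro x y hxy
    have := congrArg ψ hxy
    rwa [← AlgHom.comp_apply, ← AlgHom.comp_apply, hcomp, AlgHom.id_apply, AlgHom.id_apply]
      at this
  -- determinant of P is nonzero
  have hdetP : P.det ≠ 0 := by
    intro h
    have h1 : P.det * Q.det = 1 := by rw [← Matrix.det_mul, hPQ, Matrix.det_one]
    rw [h, zero_mul] at h1
    exact zero_ne_one h1
  -- the main transformation identity
  have hmain : Hdet d (algHyper d b')
      = (MvPolynomial.C P.det) ^ d * φ (Hdet d (algHyper d b)) := by
    have h1 : algHyper d b' = fun v => ∑ w : Fin d → Fin n,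
        (∏ ℓ, ((P.map MvPolynomial.C).transpose) (v ℓ) (w ℓ)) * φ (algHyper d b w) := by
      funext v
      rw [key v]
      rfl
    rw [h1, Hdet_transform, Matrix.det_transpose, ← RingHom.mapMatrix_apply,
      ← RingHom.map_det]
    congr 1
    exact Hdet_ringHom (φ : MvPolynomial (Fin n) ℂ →+* MvPolynomial (Fin n) ℂ) d (algHyper d b)
  -- conclude
  have hcard : (Fintype.card (Equiv.Perm (Fin n)) : MvPolynomial (Fin n) ℂ) ≠ 0 := by
    exact_mod_cast Nat.cast_ne_zero.mpr (Fintype.card_ne_zero)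
  have hiff : ∀ (c : Module.Basis (Fin n) ℂ A), hdet d (algHyper d c) = 0 ↔
      Hdet d (algHyper d c) = 0 := by
    intro c
    rw [Hdet_eq_card_smul_hdet d hd0 hde, nsmul_eq_mul, mul_eq_zero]
    constructor
    · intro h; exact Or.inr h
    · rintro (h | h)
      · exact absurd h hcard
      · exact h
  have hC : (MvPolynomial.C P.det : MvPolynomial (Fin n) ℂ) ≠ 0 := by
    simpa using hdetP
  have hφ0 : φ (Hdet d (algHyper d b)) = 0 ↔ Hdet d (algHyper d b) = 0 := by
    constructor
    · intro h; exact hφinj (by simpa using h)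
    · intro h; rw [h, map_zero]
  rw [not_iff_not, hiff b, hiff b', hmain, mul_eq_zero,
    pow_eq_zero_iff hd0.ne', hφ0]
  simp only [hC, false_or]
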